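/- Let u be a linear functional on 𝒫 which is regular and satisfies D_{q,ω}(φu) = ψu, where φ(x) = ax² + bx + c has degree at most 2, ψ(x) = dx + e has degree at most 1, and at least one of φ, ψ is not the zero polynomial. Then (φ, ψ) is a (q,ω)-admissible pair, i.e., d_n := dq^n + a[n]_q ≠ 0 for every integer n ≥ 0. -/

import Mathlib

open Polynomial

noncomputable section

namespace HahnOPSPaper

/-- The algebraic dual of the space of complex polynomials. -/
abbrev PDual : Type := Module.Dual ℂ (Polynomial ℂ)

/-- Left multiplication of a functional by a polynomial: `⟨φu, f⟩ = ⟨u, φf⟩`. -/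
def pMul (φ : Polynomial ℂ) (u : PDual) : PDual := u ∘ₗ LinearMap.mulLeft ℂ φ

/-- Distributional derivative: `⟨Du, f⟩ = -⟨u, f'⟩`. -/
def dDeriv (u : PDual) : PDual :=
  -(u ∘ₗ (Polynomial.derivative : Polynomial ℂ →ₗ[ℂ] Polynomial ℂ))

/-- The q-bracket `[n]_q = 1 + q + ⋯ + q^(n-1)`. -/
def qBracket (q : ℂ) (n : ℕ) : ℂ := ∑ i ∈ Finset.range n, q ^ i

/-- q-factorial `[n]_q!`. -/
def qFact (q : ℂ) (n : ℕ) : ℂ := ∏ i ∈ Finset.range n, qBracket q (i + 1)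

/-- `D` is Hahn's operator `D_{q,ω}`, i.e. the (unique, for `(q,ω) ≠ (1,0)`) linear operator
with `((q-1)x + ω)·(Df)(x) = f(qx+ω) - f(x)`. -/
def IsHahn (q ω : ℂ) (D : Polynomial ℂ →ₗ[ℂ] Polynomial ℂ) : Prop :=
  ∀ f : Polynomial ℂ, (C (q - 1) * X + C ω) * D f = f.comp (C q * X + C ω) - f

/-- The operator `(L_{q,ω} f)(x) = f(qx + ω)`. -/
def Lop (q ω : ℂ) : Polynomial ℂ →ₗ[ℂ] Polynomial ℂ :=
  (aeval (C q * X + C ω)).toLinearMap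

/-- The distributional Hahn operator `D_{q,ω}` on the dual, built from the ordinary operator
`D*_{q,ω} = D_{1/q,-ω/q}`: `⟨D_{q,ω}u, f⟩ = -q⁻¹·⟨u, D*_{q,ω}f⟩`. -/
def hahnDual (q : ℂ) (Dstar : Polynomial ℂ →ₗ[ℂ] Polynomial ℂ) (u : PDual) : PDual :=
  (-q⁻¹) • (u ∘ₗ Dstar)

/-- The distributional operator `L_{q,ω}`: `⟨L_{q,ω}u, f⟩ = q⁻¹·⟨u, L_{1/q,-ω/q}f⟩`. -/
def LDual (q ω : ℂ) (u : PDual) : PDual := q⁻¹ • (u ∘ₗ Lop q⁻¹ (-ω / q))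

/-- A functional is regular if it admits a monic orthogonal polynomial sequence. -/
def IsRegularFunc (u : PDual) : Prop :=
  ∃ P : ℕ → Polynomial ℂ, (∀ n, (P n).Monic ∧ (P n).natDegree = n) ∧
    (∀ m n, m ≠ n → u (P m * P n) = 0) ∧ (∀ n, u (P n ^ 2) ≠ 0)

/-- `P` is the monic OPS with respect to `u`. -/
def IsMonicOPS (u : PDual) (P : ℕ → Polynomial ℂ) : Prop :=
  (∀ n, (P n).Monic ∧ (P n).natDegree = n) ∧
    (∀ m n, m ≠ n → u (P m * P n) = 0) ∧ (∀ n, u (P n ^ 2) ≠ 0)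

/-- Continuous case: `d_n = d + a·n`. -/
def ddC (a d : ℂ) (n : ℕ) : ℂ := d + a * n

/-- Continuous case: `e_n = e + b·n`. -/
def eeC (b e : ℂ) (n : ℕ) : ℂ := e + b * n

/-- Continuous case: `β_n = n·e_{n-1}/d_{2n-2} - (n+1)·e_n/d_{2n}`. -/
def betaC (a b d e : ℂ) (n : ℕ) : ℂ :=
  n * eeC b e (n - 1) / ddC a d (2 * n - 2) - (n + 1) * eeC b e n / ddC a d (2 * n)

/-- Continuous case: `γ_{n+1} = -((n+1)·d_{n-1}/(d_{2n-1}·d_{2n+1}))·φ(-e_n/d_{2n})`. -/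
def gammaC (a b d e : ℂ) (φ : Polynomial ℂ) (n : ℕ) : ℂ :=
  -((n + 1) * ddC a d (n - 1) / (ddC a d (2 * n - 1) * ddC a d (2 * n + 1))) *
    φ.eval (-(eeC b e n) / ddC a d (2 * n))

/-- `d_n = d·q^n + a·[n]_q`. -/
def ddQ (q a d : ℂ) (n : ℕ) : ℂ := d * q ^ n + a * qBracket q n

/-- `e_n = e·q^n + (ω·d_n + b)·[n]_q`. -/
def eeQ (q ω a b d e : ℂ) (n : ℕ) : ℂ :=
  e * q ^ n + (ω * ddQ q a d n + b) * qBracket q n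

/-- `β_n = ω[n]_q + [n]_q·e_{n-1}/d_{2n-2} - [n+1]_q·e_n/d_{2n}`. -/
def betaQ (q ω a b d e : ℂ) (n : ℕ) : ℂ :=
  ω * qBracket q n + qBracket q n * eeQ q ω a b d e (n - 1) / ddQ q a d (2 * n - 2)
    - qBracket q (n + 1) * eeQ q ω a b d e n / ddQ q a d (2 * n)

/-- `γ_{n+1} = -(q^n·[n+1]_q·d_{n-1}/(d_{2n-1}·d_{2n+1}))·φ(-e_n/d_{2n})`. -/
def gammaQ (q ω a b d e : ℂ) (φ : Polynomial ℂ) (n : ℕ) : ℂ :=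
  -(q ^ n * qBracket q (n + 1) * ddQ q a d (n - 1) /
      (ddQ q a d (2 * n - 1) * ddQ q a d (2 * n + 1))) *
    φ.eval (-(eeQ q ω a b d e n) / ddQ q a d (2 * n))

/-- `Φ(x;n) = ∏_{j=1}^n φ(q^j x + ω[j]_q)`. -/
def PhiQ (q ω : ℂ) (φ : Polynomial ℂ) (n : ℕ) : Polynomial ℂ :=
  ∏ j ∈ Finset.range n, φ.comp (C (q ^ (j + 1)) * X + C (ω * qBracket q (j + 1)))

/-- `k_n = q^{n(n-3)/2}·∏_{j=0}^{n-1} d_{n+j-1}⁻¹`. -/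
def kQ (q a d : ℂ) (n : ℕ) : ℂ :=
  q ^ (((n : ℤ) * ((n : ℤ) - 3)) / 2) * ∏ j ∈ Finset.range n, (ddQ q a d (n + j - 1))⁻¹

-- ### auxiliary lemmas

lemma qBracket_inv (q : ℂ) (hq0 : q ≠ 0) (n : ℕ) :
    q ^ (n - 1) * qBracket q⁻¹ n = qBracket q n := by
  rcases Nat.eq_zero_or_pos n with h | h
  · subst h; simp [qBracket]
  unfold qBracket
  rw [Finset.mul_sum, ← Finset.sum_range_reflect (fun j => q ^ j) n]
  refine Finset.sum_congr rfl fun i hi => ?_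
  rw [Finset.mem_range] at hi
  rw [inv_pow, ← div_eq_mul_inv]
  exact (pow_sub₀ q hq0 (by omega)).symm

lemma qBracket_ne_zero (q : ℂ) (hq0 : q ≠ 0)
    (hqr : ∀ n : ℕ, 0 < n → q ^ n = 1 → q = 1) (n : ℕ) (hn : 0 < n) :
    qBracket q n ≠ 0 := by
  by_cases hq1 : q = 1
  · subst hq1
    simp only [qBracket, one_pow, Finset.sum_const, Finset.card_range, nsmul_eq_mul, mul_one]
    exact_mod_cast Nat.cast_ne_zero.mpr hn.ne'
  · rw [qBracket, geom_sum_eq hq1]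
    apply div_ne_zero
    · exact sub_ne_zero.mpr fun h => hq1 (hqr n hn h)
    · exact sub_ne_zero.mpr hq1

lemma qBracket_inv_ne_zero (q : ℂ) (hq0 : q ≠ 0)
    (hqr : ∀ n : ℕ, 0 < n → q ^ n = 1 → q = 1) (n : ℕ) (hn : 0 < n) :
    qBracket q⁻¹ n ≠ 0 := by
  intro h
  have := qBracket_inv q hq0 n
  rw [h, mul_zero] at this
  exact qBracket_ne_zero q hq0 hqr n hn this.symm

section Dstar

variable {q ω : ℂ} {Dstar : Polynomial ℂ →ₗ[ℂ] Polynomial ℂ}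

lemma hZ_ne (hq0 : q ≠ 0) (hqω : q ≠ 1 ∨ ω ≠ 0) :
    C (q⁻¹ - 1) * X + C (-ω / q) ≠ 0 := by
  intro h
  have h1 : q⁻¹ - 1 = 0 := by
    have := congrArg (fun p => coeff p 1) h
    simpa using this
  have h0 : -ω / q = 0 := by
    have := congrArg (fun p => coeff p 0) h
    simpa using this
  have hq1 : q = 1 := inv_eq_one.mp (sub_eq_zero.mp h1)
  have hω : ω = 0 := by
    rcases div_eq_zero_iff.mp h0 with h | h
    · exact neg_eq_zero.mp h
    · exact absurd h hq0
  rcases hqω with h | h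
  · exact h hq1
  · exact h hω

lemma Dstar_one (hq0 : q ≠ 0) (hqω : q ≠ 1 ∨ ω ≠ 0)
    (hD : IsHahn q⁻¹ (-ω / q) Dstar) : Dstar 1 = 0 := by
  have h := hD 1
  rw [one_comp, sub_self] at h
  exact (mul_eq_zero.mp h).resolve_left (hZ_ne hq0 hqω)

lemma A_pow_coeff_top (hq0 : q ≠ 0) (k : ℕ) :
    ((C q⁻¹ * X + C (-ω / q)) ^ (k + 1)).coeff (k + 1) = q⁻¹ ^ (k + 1) := by
  have hA : C q⁻¹ * X + C (-ω / q) = C q⁻¹ * (X + C (-ω)) := by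
    rw [mul_add, ← C_mul]
    congr 1
    rw [neg_div, div_eq_inv_mul]
    ring_nf
  rw [hA, mul_pow, ← C_pow, coeff_C_mul, coeff_X_add_C_pow]
  simp

lemma A_pow_coeff_sub (hq0 : q ≠ 0) (k : ℕ) :
    ((C q⁻¹ * X + C (-ω / q)) ^ (k + 1)).coeff k = q⁻¹ ^ (k + 1) * (-ω) * (k + 1) := by
  have hA : C q⁻¹ * X + C (-ω / q) = C q⁻¹ * (X + C (-ω)) := by
    rw [mul_add, ← C_mul]
    congr 1
    rw [neg_div, div_eq_inv_mul]
    ring_nf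
  rw [hA, mul_pow, ← C_pow, coeff_C_mul, coeff_X_add_C_pow]
  simp [Nat.succ_sub_one, Nat.choose_succ_self_right]
  ring

lemma A_pow_natDegree_le (k : ℕ) :
    ((C q⁻¹ * X + C (-ω / q)) ^ (k + 1)).natDegree ≤ k + 1 := by
  refine natDegree_pow_le.trans ?_
  calc (k + 1) * (C q⁻¹ * X + C (-ω / q)).natDegree ≤ (k + 1) * 1 :=
        Nat.mul_le_mul_left _ natDegree_linear_le
    _ = k + 1 := Nat.mul_one _

lemma Dstar_X_pow (hq0 : q ≠ 0) (hqω : q ≠ 1 ∨ ω ≠ 0)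
    (hqr : ∀ n : ℕ, 0 < n → q ^ n = 1 → q = 1)
    (hD : IsHahn q⁻¹ (-ω / q) Dstar) (k : ℕ) :
    (Dstar (X ^ (k + 1))).natDegree ≤ k ∧
      (Dstar (X ^ (k + 1))).coeff k = qBracket q⁻¹ (k + 1) := by
  set g := Dstar (X ^ (k + 1)) with hg
  set A := C q⁻¹ * X + C (-ω / q) with hA
  have hid : (C (q⁻¹ - 1) * X + C (-ω / q)) * g = A ^ (k + 1) - X ^ (k + 1) := by
    rw [hg, hD (X ^ (k + 1)), X_pow_comp]
  have hGdeg : (A ^ (k + 1) - X ^ (k + 1)).natDegree ≤ k + 1 := by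
    refine (natDegree_sub_le _ _).trans (max_le ?_ ?_)
    · exact A_pow_natDegree_le k
    · simp
  by_cases hq1 : q = 1
  · -- q = 1 case
    subst hq1
    have hω : ω ≠ 0 := hqω.resolve_left (by simp)
    simp only [inv_one, sub_self, C_0, zero_mul, zero_add] at hid
    -- hid : C (-ω/1) * g = A^(k+1) - X^(k+1)
    have hcoeff : ∀ j : ℕ, (-ω) * g.coeff j = (A ^ (k + 1) - X ^ (k + 1)).coeff j := by
      intro j
      have := congrArg (fun p => coeff p j) hid
      simpa [coeff_C_mul] using this
    have htopG : (A ^ (k + 1) - X ^ (k + 1)).coeff (k + 1) = 0 := by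
      rw [coeff_sub, A_pow_coeff_top (one_ne_zero) k]
      simp
    have hsubG : (A ^ (k + 1) - X ^ (k + 1)).coeff k = -ω * (k + 1) := by
      rw [coeff_sub, A_pow_coeff_sub (one_ne_zero) k, coeff_X_pow]
      norm_num
    constructor
    · rw [natDegree_le_iff_coeff_eq_zero]
      intro N hN
      have h1 := hcoeff N
      have h2 : (A ^ (k + 1) - X ^ (k + 1)).coeff N = 0 := by
        rcases Nat.lt_or_ge (k + 1) N with h | h
        · exact coeff_eq_zero_of_natDegree_lt (lt_of_le_of_lt hGdeg h)
        · have : N = k + 1 := by omega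
          rw [this]; exact htopG
      rw [h2] at h1
      exact (mul_eq_zero.mp h1).resolve_left (neg_ne_zero.mpr hω)
    · have h1 := hcoeff k
      rw [hsubG] at h1
      have hgk : g.coeff k = ((k : ℂ) + 1) := mul_left_cancel₀ (neg_ne_zero.mpr hω) h1
      rw [hgk]
      simp [qBracket]
  · -- q ≠ 1 case
    have hα : q⁻¹ - 1 ≠ 0 := by
      rw [sub_ne_zero, ne_eq, inv_eq_one]; exact hq1
    have hqpow : q ^ (k + 1) ≠ 1 := fun h => hq1 (hqr (k + 1) (Nat.succ_pos k) h)
    have hptop : q⁻¹ ^ (k + 1) - 1 ≠ 0 := by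
      rw [sub_ne_zero, inv_pow, ne_eq, inv_eq_one]
      exact hqpow
    have htopG : (A ^ (k + 1) - X ^ (k + 1)).coeff (k + 1) = q⁻¹ ^ (k + 1) - 1 := by
      rw [coeff_sub, A_pow_coeff_top hq0 k, coeff_X_pow]
      simp
    have hgne : g ≠ 0 := by
      intro h
      rw [h, mul_zero] at hid
      have := congrArg (fun p => coeff p (k + 1)) hid
      simp only [coeff_zero] at this
      rw [← htopG] at hptop
      exact hptop this.symm
    have hZdeg : (C (q⁻¹ - 1) * X + C (-ω / q)).natDegree = 1 := natDegree_linear hα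
    have hZne : (C (q⁻¹ - 1) * X + C (-ω / q)) ≠ 0 := hZ_ne hq0 hqω
    have hmul : 1 + g.natDegree ≤ k + 1 := by
      have h := natDegree_mul hZne hgne
      rw [hid, hZdeg] at h
      omega
    have hgdeg : g.natDegree ≤ k := by omega
    refine ⟨hgdeg, ?_⟩
    have hck : ((C (q⁻¹ - 1) * X + C (-ω / q)) * g).coeff (k + 1)
        = (q⁻¹ - 1) * g.coeff k + (-ω / q) * g.coeff (k + 1) := by
      rw [add_mul, coeff_add, mul_assoc, coeff_C_mul, coeff_C_mul, coeff_X_mul]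
    have hgk1 : g.coeff (k + 1) = 0 := coeff_eq_zero_of_natDegree_lt (by omega)
    rw [hid, htopG, hgk1, mul_zero, add_zero] at hck
    have : g.coeff k = (q⁻¹ ^ (k + 1) - 1) / (q⁻¹ - 1) :=
      (eq_div_iff hα).mpr (by linear_combination -hck)
    rw [this, qBracket, geom_sum_eq (by rwa [ne_eq, inv_eq_one]) (k + 1)]

lemma Dstar_mul (hq0 : q ≠ 0) (hqω : q ≠ 1 ∨ ω ≠ 0)
    (hD : IsHahn q⁻¹ (-ω / q) Dstar) (f g : Polynomial ℂ) :
    Dstar (f * g) = Dstar f * g.comp (C q⁻¹ * X + C (-ω / q)) + f * Dstar g := by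
  apply mul_left_cancel₀ (hZ_ne hq0 hqω)
  calc (C (q⁻¹ - 1) * X + C (-ω / q)) * Dstar (f * g)
      = (f * g).comp (C q⁻¹ * X + C (-ω / q)) - f * g := hD (f * g)
    _ = (f.comp (C q⁻¹ * X + C (-ω / q)) - f) * g.comp (C q⁻¹ * X + C (-ω / q))
        + f * (g.comp (C q⁻¹ * X + C (-ω / q)) - g) := by rw [mul_comp]; ring
    _ = ((C (q⁻¹ - 1) * X + C (-ω / q)) * Dstar f) * g.comp (C q⁻¹ * X + C (-ω / q))
        + f * ((C (q⁻¹ - 1) * X + C (-ω / q)) * Dstar g) := by rw [hD f, hD g]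
    _ = (C (q⁻¹ - 1) * X + C (-ω / q)) *
        (Dstar f * g.comp (C q⁻¹ * X + C (-ω / q)) + f * Dstar g) := by ring

lemma Dstar_surj (hq0 : q ≠ 0) (hqω : q ≠ 1 ∨ ω ≠ 0)
    (hqr : ∀ n : ℕ, 0 < n → q ^ n = 1 → q = 1)
    (hD : IsHahn q⁻¹ (-ω / q) Dstar) (v : Polynomial ℂ) :
    ∃ w, Dstar w = v := by
  suffices H : ∀ N (v : Polynomial ℂ), (∀ j, N ≤ j → v.coeff j = 0) → ∃ w, Dstar w = v by
    exact H (v.natDegree + 1) v fun j hj => coeff_eq_zero_of_natDegree_lt (by omega)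
  intro N
  induction N with
  | zero =>
    intro v hv
    have : v = 0 := by
      ext j; exact hv j (Nat.zero_le j)
    exact ⟨0, by rw [map_zero, this]⟩
  | succ N ih =>
    intro v hv
    set B := qBracket q⁻¹ (N + 1) with hB
    have hBne : B ≠ 0 := qBracket_inv_ne_zero q hq0 hqr (N + 1) (Nat.succ_pos N)
    obtain ⟨hsdeg, hscoeff⟩ := Dstar_X_pow hq0 hqω hqr hD N
    set s := Dstar (X ^ (N + 1)) with hs
    set cc := v.coeff N / B with hcc
    have hcond : ∀ j, N ≤ j → (v - C cc * s).coeff j = 0 := by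
      intro j hj
      rw [coeff_sub, coeff_C_mul]
      rcases eq_or_lt_of_le hj with h | h
      · rw [← h, hscoeff, ← hB, hcc, div_mul_cancel₀ _ hBne, sub_self]
      · rw [hv j (by omega), coeff_eq_zero_of_natDegree_lt (lt_of_le_of_lt hsdeg (by omega))]
        simp
    obtain ⟨w, hw⟩ := ih (v - C cc * s) hcond
    refine ⟨w + C cc * X ^ (N + 1), ?_⟩
    rw [map_add, hw]
    have hDs : Dstar (C cc * X ^ (N + 1)) = C cc * s := by
      rw [C_mul', C_mul', map_smul, hs]
    rw [hDs]
    exact sub_add_cancel _ _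

end Dstar

section OPS

variable {u : PDual} {P : ℕ → Polynomial ℂ}

lemma ops_P0 (hPm : ∀ n, (P n).Monic ∧ (P n).natDegree = n) : P 0 = 1 :=
  (hPm 0).1.natDegree_eq_zero.mp (hPm 0).2

lemma ops_ann (hPm : ∀ n, (P n).Monic ∧ (P n).natDegree = n)
    (hPo : ∀ m n, m ≠ n → u (P m * P n) = 0) :
    ∀ N (g : Polynomial ℂ), g.natDegree ≤ N → ∀ j : ℕ, g.degree < j → u (P j * g) = 0 := by
  intro N
  induction N with
  | zero =>
    intro g hg j hj
    by_cases hg0 : g = 0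
    · rw [hg0, mul_zero, map_zero]
    · have hgC : g = C (g.coeff 0) := eq_C_of_natDegree_le_zero hg
      have hj0 : j ≠ 0 := by
        rintro rfl
        rw [degree_eq_natDegree hg0] at hj
        exact absurd hj (by simp)
      have hPj : u (P j) = 0 := by
        have h0 := hPo j 0 hj0
        rwa [ops_P0 hPm, mul_one] at h0
      rw [hgC, mul_comm, C_mul', map_smul, hPj, smul_zero]
  | succ N ih =>
    intro g hg j hj
    by_cases hg0 : g = 0
    · rw [hg0, mul_zero, map_zero]
    by_cases hgN : g.natDegree ≤ N
    · exact ih g hgN j hj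
    have hdeg : g.natDegree = N + 1 := by omega
    set r := g - C g.leadingCoeff * P (N + 1) with hr
    have hjk : j ≠ N + 1 := by
      have h1 : (g.natDegree : WithBot ℕ) < j := by
        rw [← degree_eq_natDegree hg0]; exact hj
      rw [hdeg] at h1
      have h2 : N + 1 < j := by exact_mod_cast h1
      omega
    have hdq : (C g.leadingCoeff * P (N + 1)).degree = g.degree := by
      rw [degree_C_mul (leadingCoeff_ne_zero.mpr hg0),
        degree_eq_natDegree (hPm (N + 1)).1.ne_zero, (hPm (N + 1)).2,
        degree_eq_natDegree hg0, hdeg]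
    have hterm1 : u (P j * (C g.leadingCoeff * P (N + 1))) = 0 := by
      have h0 := hPo j (N + 1) hjk
      have hre : P j * (C g.leadingCoeff * P (N + 1)) = C g.leadingCoeff * (P j * P (N + 1)) := by
        ring
      rw [hre, C_mul', map_smul, h0, smul_zero]
    have hterm2 : u (P j * r) = 0 := by
      by_cases hr0 : r = 0
      · rw [hr0, mul_zero, map_zero]
      · have hdr : r.degree < g.degree := degree_sub_lt hdq.symm hg0
          (by rw [leadingCoeff_mul, leadingCoeff_C, (hPm (N + 1)).1.leadingCoeff, mul_one])
        have hrN : r.natDegree ≤ N := by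
          have := natDegree_lt_natDegree hr0 hdr
          omega
        exact ih r hrN j (hdr.trans hj)
    have hsum : u (P j * g) = u (P j * (C g.leadingCoeff * P (N + 1))) + u (P j * r) := by
      rw [← map_add]
      congr 1
      rw [hr]; ring
    rw [hsum, hterm1, hterm2, add_zero]

lemma ops_pair (hPm : ∀ n, (P n).Monic ∧ (P n).natDegree = n)
    (hPo : ∀ m n, m ≠ n → u (P m * P n) = 0)
    (hPn : ∀ n, u (P n ^ 2) ≠ 0) (g : Polynomial ℂ) (hg0 : g ≠ 0) :
    u (P g.natDegree * g) ≠ 0 := by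
  set j := g.natDegree with hj
  set r := g - C g.leadingCoeff * P j with hr
  have hdq : (C g.leadingCoeff * P j).degree = g.degree := by
    rw [degree_C_mul (leadingCoeff_ne_zero.mpr hg0),
      degree_eq_natDegree (hPm j).1.ne_zero, (hPm j).2, degree_eq_natDegree hg0]
  have hterm2 : u (P j * r) = 0 := by
    by_cases hr0 : r = 0
    · rw [hr0, mul_zero, map_zero]
    · have hdr : r.degree < g.degree := degree_sub_lt hdq.symm hg0
        (by rw [leadingCoeff_mul, leadingCoeff_C, (hPm j).1.leadingCoeff, mul_one])
      have hjd : r.degree < (j : WithBot ℕ) := by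
        rw [← degree_eq_natDegree hg0]; exact hdr
      exact ops_ann hPm hPo r.natDegree r le_rfl j hjd
  have hmain : u (P j * g) = g.leadingCoeff * u (P j ^ 2) + u (P j * r) := by
    have hPg : P j * g = C g.leadingCoeff * P j ^ 2 + P j * r := by
      rw [hr]; ring
    rw [hPg, map_add, C_mul', map_smul, smul_eq_mul]
  rw [hmain, hterm2, add_zero]
  exact mul_ne_zero (leadingCoeff_ne_zero.mpr hg0) (hPn j)

end OPS

theorem stmt_11 (q ω : ℂ) (hq0 : q ≠ 0) (hqω : q ≠ 1 ∨ ω ≠ 0)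
    (hqr : ∀ n : ℕ, 0 < n → q ^ n = 1 → q = 1)
    (a b c d e : ℂ) (φ ψ : Polynomial ℂ)
    (hφ : φ = C a * X ^ 2 + C b * X + C c) (hψ : ψ = C d * X + C e)
    (hne : φ ≠ 0 ∨ ψ ≠ 0)
    (Dstar : Polynomial ℂ →ₗ[ℂ] Polynomial ℂ) (hDstar : IsHahn q⁻¹ (-ω / q) Dstar)
    (u : PDual) (hreg : IsRegularFunc u)
    (heq : hahnDual q Dstar (pMul φ u) = pMul ψ u) :
    ∀ n : ℕ, ddQ q a d n ≠ 0 := by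

  obtain ⟨P, hPm, hPo, hPn⟩ := hreg
  have hu1 : u 1 ≠ 0 := by
    have h0 := hPn 0
    rwa [ops_P0 hPm, one_pow] at h0
  have hF : ∀ f, u (φ * Dstar f + C q * ψ * f) = 0 := by
    intro f
    have h0 := LinearMap.congr_fun heq f
    simp only [hahnDual, pMul, LinearMap.smul_apply, LinearMap.comp_apply,
      LinearMap.mulLeft_apply, smul_eq_mul] at h0
    have h1 : u (C q * ψ * f) = q * u (ψ * f) := by
      rw [mul_assoc, C_mul', map_smul, smul_eq_mul]
    rw [map_add, h1, ← h0]
    field_simp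
    ring
  intro n hd
  have hcoef : a * qBracket q⁻¹ n + q * d = 0 := by
    rcases n with _ | k
    · have hd0 : d = 0 := by simpa [ddQ, qBracket] using hd
      simp [qBracket, hd0]
    · have hq := qBracket_inv q hq0 (k + 1)
      rw [Nat.succ_sub_one] at hq
      have hkey : q ^ k * (a * qBracket q⁻¹ (k + 1) + q * d) = ddQ q a d (k + 1) := by
        rw [ddQ]
        linear_combination a * hq
      have h2 : q ^ k * (a * qBracket q⁻¹ (k + 1) + q * d) = 0 := hkey.trans hd
      exact (mul_eq_zero.mp h2).resolve_left (pow_ne_zero _ hq0)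
  set A : Polynomial ℂ := C q⁻¹ * X + C (-ω / q) with hA
  set Wm : Polynomial ℂ →ₗ[ℂ] Polynomial ℂ :=
    LinearMap.mulLeft ℂ φ ∘ₗ Dstar + LinearMap.mulLeft ℂ (C q * ψ) with hWm
  have hWapp : ∀ f, Wm f = φ * Dstar f + C q * ψ * f := by
    intro f
    simp [hWm, LinearMap.mulLeft_apply, mul_assoc]
  have hψdeg : ψ.natDegree ≤ 1 := hψ ▸ natDegree_linear_le
  have hWdeg : ∀ m : ℕ, (Wm (X ^ m)).natDegree ≤ m + 1 := by
    intro m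
    rw [hWapp]
    refine (natDegree_add_le _ _).trans (max_le ?_ ?_)
    · rcases m with _ | k
      · rw [pow_zero, Dstar_one hq0 hqω hDstar, mul_zero]
        simp
      · refine natDegree_mul_le.trans ?_
        have h1 := (Dstar_X_pow hq0 hqω hqr hDstar k).1
        have h2 : φ.natDegree ≤ 2 := hφ ▸ natDegree_quadratic_le
        omega
    · refine natDegree_mul_le.trans ?_
      have h1 : (C q * ψ).natDegree ≤ 1 := natDegree_mul_le.trans (by simp [hψdeg])
      have h2 : (X ^ m : Polynomial ℂ).natDegree ≤ m := natDegree_X_pow_le m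
      omega
  have hWcoeff : ∀ m : ℕ, (Wm (X ^ m)).coeff (m + 1) = a * qBracket q⁻¹ m + q * d := by
    intro m
    rw [hWapp, coeff_add]
    have hpart2 : (C q * ψ * X ^ m).coeff (m + 1) = q * d := by
      rw [hψ]
      have hre : C q * (C d * X + C e) * X ^ m
          = C (q * d) * X ^ (m + 1) + C (q * e) * X ^ m := by
        rw [C_mul, C_mul]; ring
      rw [hre, coeff_add, coeff_C_mul, coeff_C_mul, coeff_X_pow, coeff_X_pow]
      simp
    have hpart1 : (φ * Dstar (X ^ m)).coeff (m + 1) = a * qBracket q⁻¹ m := by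
      rcases m with _ | k
      · rw [pow_zero, Dstar_one hq0 hqω hDstar, mul_zero, coeff_zero]
        simp [qBracket]
      · obtain ⟨hgdeg, hgco⟩ := Dstar_X_pow hq0 hqω hqr hDstar k
        set g := Dstar (X ^ (k + 1)) with hg
        have hsplit : φ * g = C a * (X ^ 2 * g) + (C b * (X * g) + C c * g) := by
          rw [hφ]; ring
        rw [hsplit, coeff_add, coeff_add, coeff_C_mul, coeff_C_mul, coeff_C_mul]
        have e1 : (X ^ 2 * g).coeff (k + 2) = g.coeff k := coeff_X_pow_mul g 2 k
        have e2 : (X * g).coeff (k + 2) = g.coeff (k + 1) := coeff_X_mul g (k + 1)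
        have e3 : g.coeff (k + 1) = 0 := coeff_eq_zero_of_natDegree_lt (by omega)
        have e4 : g.coeff (k + 2) = 0 := coeff_eq_zero_of_natDegree_lt (by omega)
        rw [e1, e2, e3, e4, hgco]
        ring
    rw [hpart1, hpart2]
  have hmemW : ∀ m : ℕ, m ≤ n → Wm (X ^ m) ∈ degreeLT ℂ (n + 1) := by
    intro m hm
    rw [mem_degreeLT]
    rcases lt_or_eq_of_le hm with h | h
    · refine lt_of_le_of_lt degree_le_natDegree ?_
      have := hWdeg m
      exact_mod_cast (by omega : (Wm (X ^ m)).natDegree < n + 1)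
    · subst h
      rw [degree_lt_iff_coeff_zero]
      intro j hj
      rcases eq_or_lt_of_le hj with h' | h'
      · rw [← h', hWcoeff m, hcoef]
      · exact coeff_eq_zero_of_natDegree_lt (lt_of_le_of_lt (hWdeg m) h')
  have hmem : ∀ f ∈ degreeLT ℂ (n + 1), Wm f ∈ degreeLT ℂ (n + 1) := by
    letI : DecidableEq ℂ := Classical.decEq ℂ
    intro f hf
    rw [degreeLT_eq_span_X_pow] at hf
    have hle : Submodule.span ℂ ↑((Finset.range (n + 1)).image fun i => (X : Polynomial ℂ) ^ i)
        ≤ (degreeLT ℂ (n + 1)).comap Wm := by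
      rw [Submodule.span_le]
      intro p hp
      simp only [Finset.coe_image, Set.mem_image, Finset.mem_coe, Finset.mem_range] at hp
      obtain ⟨m, hm, rfl⟩ := hp
      exact hmemW m (by omega)
    exact hle hf
  haveI : FiniteDimensional ℂ (degreeLT ℂ (n + 1)) :=
    Module.Finite.equiv (degreeLTEquiv ℂ (n + 1)).symm
  set W' : degreeLT ℂ (n + 1) →ₗ[ℂ] degreeLT ℂ (n + 1) :=
    LinearMap.codRestrict (degreeLT ℂ (n + 1)) (Wm.domRestrict (degreeLT ℂ (n + 1)))
      (fun x => hmem x.1 x.2) with hW'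
  by_cases hinj : Function.Injective W'
  · obtain ⟨h₀, hh₀⟩ := (LinearMap.injective_iff_surjective.mp hinj)
      ⟨1, mem_degreeLT.mpr (by rw [degree_one]; exact_mod_cast Nat.succ_pos n)⟩
    have hval : Wm h₀.1 = 1 := by
      have h2 := congrArg Subtype.val hh₀
      exact h2
    have h3 := hF h₀.1
    rw [← hWapp h₀.1, hval] at h3
    exact hu1 h3
  · have hker : LinearMap.ker W' ≠ ⊥ := fun h => hinj (LinearMap.ker_eq_bot.mp h)
    obtain ⟨x, hxk, hx0⟩ := (Submodule.ne_bot_iff _).mp hker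
    have hWh : φ * Dstar x.1 + C q * ψ * x.1 = 0 := by
      have h2 : Wm x.1 = 0 := by
        have h3 := congrArg Subtype.val (LinearMap.mem_ker.mp hxk)
        exact h3
      rwa [hWapp] at h2
    have hxne : (x.1 : Polynomial ℂ) ≠ 0 := fun h => hx0 (Subtype.ext h)
    by_cases hφ0 : φ = 0
    · rw [hφ0, zero_mul, zero_add] at hWh
      have hψ0 : ψ = 0 := by
        rcases mul_eq_zero.mp hWh with h | h
        · rcases mul_eq_zero.mp h with h' | h'
          · exact absurd h' (C_ne_zero.mpr hq0)
          · exact h'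
        · exact absurd h hxne
      rcases hne with h | h
      · exact h hφ0
      · exact h hψ0
    · have hkey : ∀ w, u (φ * (x.1).comp A * Dstar w) = 0 := by
        intro w
        have h1 := hF (w * x.1)
        have h2 : φ * Dstar (w * x.1) + C q * ψ * (w * x.1)
            = φ * (x.1).comp A * Dstar w + w * (φ * Dstar x.1 + C q * ψ * x.1) := by
          rw [Dstar_mul hq0 hqω hDstar w x.1, ← hA]
          ring
        rw [h2, hWh, mul_zero, add_zero] at h1
        exact h1
      have hAcomp : A.comp (C q * X + C ω) = X := by
        rw [hA, add_comp, mul_comp, C_comp, C_comp, X_comp]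
        have e1 : q⁻¹ * q = 1 := inv_mul_cancel₀ hq0
        have e2 : q⁻¹ * ω + -ω / q = 0 := by field_simp; ring
        calc C q⁻¹ * (C q * X + C ω) + C (-ω / q)
            = C (q⁻¹ * q) * X + C (q⁻¹ * ω + -ω / q) := by
              simp only [C_mul, C_add]; ring
          _ = X := by rw [e1, e2, C_0, C_1, one_mul, add_zero]
      have hcompne : (x.1).comp A ≠ 0 := by
        intro h
        apply hxne
        have h2 := congrArg (fun p => p.comp (C q * X + C ω)) h
        simp only [zero_comp] at h2
        rwa [comp_assoc, hAcomp, comp_X] at h2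
      have hg0ne : φ * (x.1).comp A ≠ 0 := mul_ne_zero hφ0 hcompne
      obtain ⟨w, hw⟩ := Dstar_surj hq0 hqω hqr hDstar (P ((φ * (x.1).comp A).natDegree))
      have h1 := hkey w
      rw [hw] at h1
      apply ops_pair hPm hPo hPn (φ * (x.1).comp A) hg0ne
      rw [mul_comm]
      exact h1


end HahnOPSPaper
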